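/- Let γ ≥ 1 and 0 < P⁺ < P⁻ with f(P⁺) = f(P⁻) = 0, where f(P) = P^γ − C₁ + C₂/P with C₁ = ((P⁺)^{γ+1} − (P⁻)^{γ+1})/(P⁺ − P⁻) and C₂ = P⁺P⁻·((P⁺)^γ − (P⁻)^γ)/(P⁺ − P⁻) > 0. Define F(P) = P^{γ+1}/(γ+1) − C₁P + C₂·ln P, so F' = f. Then there exists P⋆ ∈ (0, P⁺) such that F(P) − F(P⁻) < 0 for 0 < P < P⋆, F(P⋆) = F(P⁻), and F(P) − F(P⁻) > 0 for P⋆ < P < P⁻. -/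

import Mathlib

/-- for the antiderivative `F` of the profile nonlinearity `f`, there is a point
`P⋆ ∈ (0, P⁺)` with `F − F(P⁻)` negative on `(0, P⋆)`, zero at `P⋆`, and positive on
`(P⋆, P⁻)`. -/
theorem stmt_7 (γ Pp Pm C₁ C₂ : ℝ) (hγ : 1 ≤ γ) (hPp : 0 < Pp) (hPpPm : Pp < Pm)
    (hC₁ : C₁ = (Pp ^ (γ + 1) - Pm ^ (γ + 1)) / (Pp - Pm))
    (hC₂ : C₂ = Pp * Pm * ((Pp ^ γ - Pm ^ γ) / (Pp - Pm)))
    (hC₂pos : 0 < C₂)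
    (f F : ℝ → ℝ)
    (hf : ∀ P : ℝ, f P = P ^ γ - C₁ + C₂ / P)
    (hfPp : f Pp = 0) (hfPm : f Pm = 0)
    (hF : ∀ P : ℝ, F P = P ^ (γ + 1) / (γ + 1) - C₁ * P + C₂ * Real.log P) :
    ∃ Ps : ℝ, Ps ∈ Set.Ioo 0 Pp ∧
      (∀ P : ℝ, 0 < P → P < Ps → F P - F Pm < 0) ∧
      F Ps = F Pm ∧
      (∀ P : ℝ, Ps < P → P < Pm → 0 < F P - F Pm) := by
  have hPm : 0 < Pm := hPp.trans hPpPm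
  have hγ1 : (0:ℝ) < γ + 1 := by linarith
  -- the auxiliary strictly convex function g = P f(P)
  set g : ℝ → ℝ := fun x => x ^ (γ + 1) + (C₂ - C₁ * x) with hg
  have hgf : ∀ x : ℝ, 0 < x → g x = x * f x := by
    intro x hx
    rw [hf, hg]
    simp only
    rw [Real.rpow_add_one hx.ne' γ]
    field_simp
    ring
  have hgPp : g Pp = 0 := by rw [hgf Pp hPp, hfPp, mul_zero]
  have hgPm : g Pm = 0 := by rw [hgf Pm hPm, hfPm, mul_zero]
  have hsc : StrictConvexOn ℝ (Set.Ici 0) g := by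
    have h1 : StrictConvexOn ℝ (Set.Ici 0) (fun x : ℝ => x ^ (γ + 1)) :=
      strictConvexOn_rpow (by linarith)
    have h2 : ConvexOn ℝ (Set.Ici 0) (fun x : ℝ => C₂ - C₁ * x) := by
      refine ⟨convex_Ici 0, ?_⟩
      intro x _ y _ a b ha hb hab
      have hb' : b = 1 - a := by linarith
      simp only [smul_eq_mul]
      rw [hb']
      apply le_of_eq
      ring
    exact h1.add_convexOn h2
  -- sign of g, hence of f, on (0, Pp) and (Pp, Pm)
  have hgneg : ∀ P : ℝ, Pp < P → P < Pm → g P < 0 := by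
    intro P h1 h2
    have hd : 0 < Pm - Pp := by linarith
    have ht1 : 0 < (Pm - P) / (Pm - Pp) := div_pos (by linarith) hd
    have ht2 : 0 < (P - Pp) / (Pm - Pp) := div_pos (by linarith) hd
    have hsum : (Pm - P) / (Pm - Pp) + (P - Pp) / (Pm - Pp) = 1 := by
      field_simp
      ring
    have hcomb : (Pm - P) / (Pm - Pp) * Pp + (P - Pp) / (Pm - Pp) * Pm = P := by
      field_simp; ring
    have key := hsc.2 (Set.mem_Ici.2 hPp.le) (Set.mem_Ici.2 hPm.le)
      (ne_of_lt hPpPm) ht1 ht2 hsum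
    simp only [smul_eq_mul] at key
    rw [hcomb, hgPp, hgPm] at key
    simpa using key
  have hgpos : ∀ P : ℝ, 0 < P → P < Pp → 0 < g P := by
    intro P h1 h2
    have hd : 0 < Pm - P := by linarith
    have ha1 : 0 < (Pm - Pp) / (Pm - P) := div_pos (by linarith) hd
    have ha2 : 0 < (Pp - P) / (Pm - P) := div_pos (by linarith) hd
    have hsum : (Pm - Pp) / (Pm - P) + (Pp - P) / (Pm - P) = 1 := by
      field_simp
      ring
    have hcomb : (Pm - Pp) / (Pm - P) * P + (Pp - P) / (Pm - P) * Pm = Pp := by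
      field_simp; ring
    have key := hsc.2 (Set.mem_Ici.2 h1.le) (Set.mem_Ici.2 hPm.le)
      (by linarith : P ≠ Pm) ha1 ha2 hsum
    simp only [smul_eq_mul] at key
    rw [hcomb, hgPp, hgPm] at key
    simp only [mul_zero, add_zero] at key
    rcases mul_pos_iff.1 key with ⟨_, h⟩ | ⟨h, _⟩
    · exact h
    · linarith
  have hfpos : ∀ P : ℝ, 0 < P → P < Pp → 0 < f P := by
    intro P h1 h2
    have := hgpos P h1 h2
    rw [hgf P h1] at this
    nlinarith
  have hfneg : ∀ P : ℝ, Pp < P → P < Pm → f P < 0 := by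
    intro P h1 h2
    have := hgneg P h1 h2
    rw [hgf P (hPp.trans h1)] at this
    nlinarith [hPp.trans h1]
  -- F' = f on (0, ∞)
  have hF' : ∀ x : ℝ, 0 < x → HasDerivAt F (f x) x := by
    intro x hx
    have h1 : HasDerivAt (fun y : ℝ => y ^ (γ + 1)) ((γ + 1) * x ^ γ) x := by
      have := Real.hasDerivAt_rpow_const (x := x) (p := γ + 1) (Or.inl hx.ne')
      simpa using this
    have h2 := h1.div_const (γ + 1)
    have h3 : HasDerivAt (fun y : ℝ => C₁ * y) C₁ x := by
      simpa using (hasDerivAt_id x).const_mul C₁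
    have h4 : HasDerivAt (fun y : ℝ => C₂ * Real.log y) (C₂ * x⁻¹) x :=
      (Real.hasDerivAt_log hx.ne').const_mul C₂
    have h5 := (h2.sub h3).add h4
    have hFe : F = fun y : ℝ => y ^ (γ + 1) / (γ + 1) - C₁ * y + C₂ * Real.log y := by
      funext y; exact hF y
    rw [hFe, hf]
    refine h5.congr_deriv ?_
    rw [mul_div_cancel_left₀ _ hγ1.ne', div_eq_mul_inv]
  -- monotonicity of F
  have hmono : StrictMonoOn F (Set.Ioc 0 Pp) := by
    apply strictMonoOn_of_deriv_pos (convex_Ioc 0 Pp)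
    · intro x hx; exact (hF' x hx.1).continuousAt.continuousWithinAt
    · intro x hx
      rw [interior_Ioc] at hx
      rw [(hF' x hx.1).deriv]
      exact hfpos x hx.1 hx.2
  have hanti : StrictAntiOn F (Set.Icc Pp Pm) := by
    apply strictAntiOn_of_deriv_neg (convex_Icc Pp Pm)
    · intro x hx; exact (hF' x (hPp.trans_le hx.1)).continuousAt.continuousWithinAt
    · intro x hx
      rw [interior_Icc] at hx
      rw [(hF' x (hPp.trans hx.1)).deriv]
      exact hfneg x hx.1 hx.2
  have hFPmPp : F Pm < F Pp :=
    hanti (Set.left_mem_Icc.2 hPpPm.le) (Set.right_mem_Icc.2 hPpPm.le) hPpPm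
  -- F tends to -∞ at 0⁺
  have hlim : Filter.Tendsto F (nhdsWithin 0 (Set.Ioi 0)) Filter.atBot := by
    have h1 : Filter.Tendsto (fun x : ℝ => x ^ (γ + 1) / (γ + 1) - C₁ * x)
        (nhdsWithin 0 (Set.Ioi 0)) (nhds (0 ^ (γ + 1) / (γ + 1) - C₁ * 0)) := by
      have hc : ContinuousAt (fun x : ℝ => x ^ (γ + 1) / (γ + 1) - C₁ * x) 0 := by
        exact ((Real.continuousAt_rpow_const 0 (γ + 1) (Or.inr hγ1.le)).div_const _).sub
          ((continuous_const.mul continuous_id).continuousAt)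
      exact hc.continuousWithinAt
    rw [Real.zero_rpow hγ1.ne'] at h1
    simp only [zero_div, mul_zero, sub_zero] at h1
    have h2 : Filter.Tendsto (fun x : ℝ => C₂ * Real.log x)
        (nhdsWithin 0 (Set.Ioi 0)) Filter.atBot :=
      Real.tendsto_log_nhdsGT_zero.const_mul_atBot hC₂pos
    have h3 := h1.add_atBot h2
    refine h3.congr fun x => ?_
    rw [hF x]
  -- pick x₀ ∈ (0, Pp) with F x₀ < F Pm
  have hev : ∀ᶠ x in nhdsWithin 0 (Set.Ioi 0), F x < F Pm :=
    hlim.eventually (Filter.eventually_lt_atBot (F Pm))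
  have hev2 : ∀ᶠ x in nhdsWithin 0 (Set.Ioi 0), x < Pp := by
    filter_upwards [Ioo_mem_nhdsGT_of_mem (Set.mem_Ico.2 ⟨le_refl 0, hPp⟩)] with x hx
    exact hx.2
  have hev3 : ∀ᶠ x : ℝ in nhdsWithin 0 (Set.Ioi 0), x ∈ Set.Ioi (0:ℝ) :=
    eventually_mem_nhdsWithin
  obtain ⟨x₀, ⟨hFx₀, hx₀Pp⟩, hx₀pos⟩ := ((hev.and hev2).and hev3).exists
  -- IVT on [x₀, Pp]
  have hcont : ContinuousOn F (Set.Icc x₀ Pp) := fun x hx =>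
    (hF' x (lt_of_lt_of_le hx₀pos hx.1)).continuousAt.continuousWithinAt
  have hmem : F Pm ∈ Set.Icc (F x₀) (F Pp) := ⟨hFx₀.le, hFPmPp.le⟩
  obtain ⟨Ps, hPsmem, hFPs⟩ := intermediate_value_Icc hx₀Pp.le hcont hmem
  have hPspos : 0 < Ps := lt_of_lt_of_le hx₀pos hPsmem.1
  have hPsPp : Ps < Pp := by
    rcases lt_or_eq_of_le hPsmem.2 with h | h
    · exact h
    · exfalso; rw [h] at hFPs; linarith
  refine ⟨Ps, ⟨hPspos, hPsPp⟩, ?_, hFPs, ?_⟩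
  · intro P hP hPPs
    have := hmono ⟨hP, by linarith⟩ ⟨hPspos, hPsPp.le⟩ hPPs
    linarith [hFPs ▸ this]
  · intro P hPsP hPPm
    rcases le_or_gt P Pp with h | h
    · have := hmono ⟨hPspos, hPsPp.le⟩ ⟨hPspos.trans hPsP, h⟩ hPsP
      rw [hFPs] at this
      linarith
    · have := hanti ⟨h.le, hPPm.le⟩ (Set.right_mem_Icc.2 hPpPm.le) hPPm
      linarith
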